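/- arXiv:2006.10906 — 6 statements merged into one kernel-verified Lean document; each statement's English description precedes it below -/
import Mathlib

section
/- There are no real numbers a, b such that a² + ab + b² < 1, (a-1)² + (a-1)(b-1) + (b-1)² < 1, (a-1)² + (a-1)b + b² ≥ 1, and a² + a(b-1) + (b-1)² ≥ 1 all hold simultaneously. -/
theorem stmt3 : ¬ ∃ a b : ℝ,
    a ^ 2 + a * b + b ^ 2 < 1 ∧
    (a - 1) ^ 2 + (a - 1) * (b - 1) + (b - 1) ^ 2 < 1 ∧
    (a - 1) ^ 2 + (a - 1) * b + b ^ 2 ≥ 1 ∧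
    a ^ 2 + a * (b - 1) + (b - 1) ^ 2 ≥ 1 := by
  rintro ⟨a, b, h1, h2, h3, h4⟩
  nlinarith [sq_nonneg (a - b), sq_nonneg (a + b - 1)]
end

section
/- Let z be a complex number. Define the graph G_z whose vertices are the Gaussian integers x with |x - z| < 1, with an edge between x and y if and only if x - y is a unit of ℤ[i]. Then G_z is connected. -/
/-- `z` is a Gaussian integer (as an element of `ℂ`). -/
def IsGaussianInt (z : ℂ) : Prop := ∃ a b : ℤ, z = (a : ℂ) + (b : ℂ) * Complex.I

/-- `u` is a unit of `ℤ[i]`. -/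
def IsGaussianUnit (u : ℂ) : Prop := u = 1 ∨ u = Complex.I ∨ u = -1 ∨ u = -Complex.I

/-- The edge relation of the graph `G_z`: both endpoints are Gaussian integers within
distance `1` of `z`, and they differ by a unit. -/
def GaussEdge (z x y : ℂ) : Prop :=
  IsGaussianInt x ∧ IsGaussianInt y ∧ ‖x - z‖ < 1 ∧ ‖y - z‖ < 1 ∧
    IsGaussianUnit (x - y)

lemma abs_lt_one_iff_normSq (w : ℂ) : ‖w‖ < 1 ↔ Complex.normSq w < 1 := by
  rw [← Complex.sq_norm]
  constructor <;> intro h <;> nlinarith [norm_nonneg w]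

lemma normSq_formula (z : ℂ) (u v : ℤ) :
    Complex.normSq ((u:ℂ) + (v:ℂ)*Complex.I - z) = ((u:ℝ) - z.re)^2 + ((v:ℝ) - z.im)^2 := by
  simp [Complex.normSq_apply, Complex.ext_iff]; ring

lemma unit_of_pm_one (p : ℤ) (hp : p = 1 ∨ p = -1) : IsGaussianUnit ((p : ℂ)) := by
  rcases hp with h | h <;> subst h <;> simp [IsGaussianUnit]

lemma unit_of_pm_I (q : ℤ) (hq : q = 1 ∨ q = -1) : IsGaussianUnit ((q : ℂ) * Complex.I) := by
  rcases hq with h | h <;> subst h <;> simp [IsGaussianUnit]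

lemma diag_case (z : ℂ) (a b c d : ℤ)
    (hx : ‖(a:ℂ) + (b:ℂ)*Complex.I - z‖ < 1)
    (hy : ‖(c:ℂ) + (d:ℂ)*Complex.I - z‖ < 1)
    (hp : a - c = 1 ∨ a - c = -1) (hq : b - d = 1 ∨ b - d = -1) :
    Relation.ReflTransGen (GaussEdge z) ((a:ℂ) + (b:ℂ)*Complex.I) ((c:ℂ) + (d:ℂ)*Complex.I) := by
  rw [abs_lt_one_iff_normSq, normSq_formula] at hx hy
  have hup : IsGaussianUnit (((a : ℤ) - c : ℤ) : ℂ) := unit_of_pm_one _ hp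
  have huq : IsGaussianUnit ((((b : ℤ) - d : ℤ) : ℂ) * Complex.I) := unit_of_pm_I _ hq
  by_cases h1 : ((c:ℝ) - z.re)^2 + ((b:ℝ) - z.im)^2 < 1
  · -- go through w1 = c + b I
    refine Relation.ReflTransGen.head (b := (c:ℂ) + (b:ℂ)*Complex.I) ?_
      (Relation.ReflTransGen.single ?_)
    · refine ⟨⟨a, b, rfl⟩, ⟨c, b, rfl⟩, ?_, ?_, ?_⟩
      · rw [abs_lt_one_iff_normSq, normSq_formula]; exact hx
      · rw [abs_lt_one_iff_normSq, normSq_formula]; exact h1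
      · convert hup using 1; push_cast; ring
    · refine ⟨⟨c, b, rfl⟩, ⟨c, d, rfl⟩, ?_, ?_, ?_⟩
      · rw [abs_lt_one_iff_normSq, normSq_formula]; exact h1
      · rw [abs_lt_one_iff_normSq, normSq_formula]; exact hy
      · convert huq using 1; push_cast; ring
  · -- then w2 = a + d I is in the disk
    have h2 : ((a:ℝ) - z.re)^2 + ((d:ℝ) - z.im)^2 < 1 := by push_neg at h1; nlinarith
    refine Relation.ReflTransGen.head (b := (a:ℂ) + (d:ℂ)*Complex.I) ?_
      (Relation.ReflTransGen.single ?_)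
    · refine ⟨⟨a, b, rfl⟩, ⟨a, d, rfl⟩, ?_, ?_, ?_⟩
      · rw [abs_lt_one_iff_normSq, normSq_formula]; exact hx
      · rw [abs_lt_one_iff_normSq, normSq_formula]; exact h2
      · convert huq using 1; push_cast; ring
    · refine ⟨⟨a, d, rfl⟩, ⟨c, d, rfl⟩, ?_, ?_, ?_⟩
      · rw [abs_lt_one_iff_normSq, normSq_formula]; exact h2
      · rw [abs_lt_one_iff_normSq, normSq_formula]; exact hy
      · convert hup using 1; push_cast; ring

theorem stmt5 (z : ℂ) (x y : ℂ) (hx : IsGaussianInt x) (hy : IsGaussianInt y)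
    (hxz : ‖x - z‖ < 1) (hyz : ‖y - z‖ < 1) :
    Relation.ReflTransGen (GaussEdge z) x y := by
  obtain ⟨a, b, rfl⟩ := hx
  obtain ⟨c, d, rfl⟩ := hy
  have hx' := hxz; have hy' := hyz
  rw [abs_lt_one_iff_normSq, normSq_formula] at hx' hy'
  have hd : ((a:ℝ) - c)^2 + ((b:ℝ) - d)^2 < 4 := by
    nlinarith [sq_nonneg ((a:ℝ) + c - 2*z.re), sq_nonneg ((b:ℝ) + d - 2*z.im)]
  have hdz : ((a - c)^2 + (b - d)^2 : ℤ) < 4 := by exact_mod_cast hd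
  have hpa : -1 ≤ a - c ∧ a - c ≤ 1 := by
    constructor <;> nlinarith [sq_nonneg (b - d), sq_nonneg (a - c)]
  have hpb : -1 ≤ b - d ∧ b - d ≤ 1 := by
    constructor <;> nlinarith [sq_nonneg (b - d), sq_nonneg (a - c)]
  have ha : a - c = 0 ∨ a - c = 1 ∨ a - c = -1 := by omega
  have hb : b - d = 0 ∨ b - d = 1 ∨ b - d = -1 := by omega
  rcases ha with ha | ha
  · rcases hb with hb | hb
    · -- equal
      have : a = c ∧ b = d := by omega
      rw [this.1, this.2]
    · -- vertical step
      refine Relation.ReflTransGen.single ⟨⟨a, b, rfl⟩, ⟨c, d, rfl⟩, hxz, hyz, ?_⟩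
      have : (a:ℂ) + (b:ℂ)*Complex.I - ((c:ℂ) + (d:ℂ)*Complex.I)
          = ((b - d : ℤ) : ℂ) * Complex.I := by
        have hac : a = c := by omega
        subst hac; push_cast; ring
      rw [this]; exact unit_of_pm_I _ hb
  · rcases hb with hb | hb
    · -- horizontal step
      refine Relation.ReflTransGen.single ⟨⟨a, b, rfl⟩, ⟨c, d, rfl⟩, hxz, hyz, ?_⟩
      have : (a:ℂ) + (b:ℂ)*Complex.I - ((c:ℂ) + (d:ℂ)*Complex.I)
          = ((a - c : ℤ) : ℂ) := by
        have hbd : b = d := by omega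
        subst hbd; push_cast; ring
      rw [this]; exact unit_of_pm_one _ ha
    · exact diag_case z a b c d hxz hyz ha hb
end

section
/- Let z be a complex number. Define the graph G_z whose vertices are the Eisenstein integers x with |x - z| < 1, with an edge between x and y if and only if x - y is a unit of ℤ[ρ]. Then G_z is connected. -/
noncomputable def ρ : ℂ := (1 + Real.sqrt 3 * Complex.I) / 2

/-- `z` is an Eisenstein integer (as an element of `ℂ`). -/
def IsEisensteinInt (z : ℂ) : Prop := ∃ a b : ℤ, z = (a : ℂ) + (b : ℂ) * ρ

/-- `u` is a unit of `ℤ[ρ]`, i.e. a sixth root of unity. -/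
def IsEisensteinUnit (u : ℂ) : Prop := ∃ k : Fin 6, u = ρ ^ (k : ℕ)

/-- The edge relation of the graph `G_z`: both endpoints are Eisenstein integers within
distance `1` of `z`, and they differ by a unit. -/
def EisEdge (z x y : ℂ) : Prop :=
  IsEisensteinInt x ∧ IsEisensteinInt y ∧ ‖x - z‖ < 1 ∧ ‖y - z‖ < 1 ∧
    IsEisensteinUnit (x - y)

lemma s3sq : Real.sqrt 3 * Real.sqrt 3 = 3 := Real.mul_self_sqrt (by norm_num)
lemma s3nn : (0:ℝ) ≤ Real.sqrt 3 := Real.sqrt_nonneg 3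
lemma rho_re : ρ.re = 1/2 := by simp [ρ]
lemma rho_im : ρ.im = Real.sqrt 3 / 2 := by simp [ρ]

lemma eis_re (a b : ℝ) : ((a:ℂ) + (b:ℂ) * ρ).re = a + b/2 := by
  simp [Complex.add_re, Complex.mul_re, rho_re, rho_im]; ring
lemma eis_im (a b : ℝ) : ((a:ℂ) + (b:ℂ) * ρ).im = b * Real.sqrt 3 / 2 := by
  simp [Complex.add_im, Complex.mul_im, rho_re, rho_im]; ring

lemma eis_normSq (a b : ℝ) : Complex.normSq ((a:ℂ) + (b:ℂ) * ρ) = a^2 + a*b + b^2 := by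
  rw [Complex.normSq_apply, eis_re, eis_im]
  nlinarith [s3sq]

lemma rho_sq : ρ^2 = ρ - 1 := by
  apply Complex.ext <;>
    simp [pow_two, Complex.mul_re, Complex.mul_im, rho_re, rho_im] <;>
    nlinarith [s3sq]

lemma rho_cube : ρ^3 = -1 := by
  have h := rho_sq
  have e : ρ^3 = ρ * ρ^2 := by ring
  rw [e, h, mul_sub, ← pow_two, h]; ring

lemma eisInt_sub {x y : ℂ} (hx : IsEisensteinInt x) (hy : IsEisensteinInt y) :
    IsEisensteinInt (x - y) := by
  obtain ⟨a, b, rfl⟩ := hx; obtain ⟨c, d, rfl⟩ := hy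
  exact ⟨a - c, b - d, by push_cast; ring⟩

lemma eisInt_add {x y : ℂ} (hx : IsEisensteinInt x) (hy : IsEisensteinInt y) :
    IsEisensteinInt (x + y) := by
  obtain ⟨a, b, rfl⟩ := hx; obtain ⟨c, d, rfl⟩ := hy
  exact ⟨a + c, b + d, by push_cast; ring⟩

lemma unit_of_pair (a b : ℤ) (h : a^2 + a*b + b^2 = 1) :
    IsEisensteinUnit ((a:ℂ) + (b:ℂ) * ρ) := by
  have h3 := rho_cube
  have h2 := rho_sq
  have ha : a^2 ≤ 1 := by nlinarith [sq_nonneg (a+b), sq_nonneg (a-b), sq_nonneg b]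
  have hb : b^2 ≤ 1 := by nlinarith [sq_nonneg (a+b), sq_nonneg (a-b), sq_nonneg a]
  have ha' : -1 ≤ a ∧ a ≤ 1 := ⟨by nlinarith, by nlinarith⟩
  have hb' : -1 ≤ b ∧ b ≤ 1 := ⟨by nlinarith, by nlinarith⟩
  obtain ⟨ha1, ha2⟩ := ha'; obtain ⟨hb1, hb2⟩ := hb'
  interval_cases a <;> interval_cases b
  · norm_num at h
  · exact ⟨⟨3, by norm_num⟩, by push_cast; simp; linear_combination -h3⟩
  · exact ⟨⟨2, by norm_num⟩, by push_cast; simp; linear_combination -h2⟩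
  · exact ⟨⟨4, by norm_num⟩, by push_cast; simp; linear_combination -ρ * h3⟩
  · norm_num at h
  · exact ⟨⟨1, by norm_num⟩, by push_cast; simp⟩
  · exact ⟨⟨5, by norm_num⟩, by push_cast; simp; linear_combination h2 - ρ^2*h3⟩
  · exact ⟨⟨0, by norm_num⟩, by push_cast; simp⟩
  · norm_num at h

lemma unit_neg {u : ℂ} (h : IsEisensteinUnit u) : IsEisensteinUnit (-u) := by
  have h3 := rho_cube
  obtain ⟨k, rfl⟩ := h
  fin_cases k
  · exact ⟨⟨3, by norm_num⟩, by simp; linear_combination -h3⟩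
  · exact ⟨⟨4, by norm_num⟩, by simp; linear_combination -ρ * h3⟩
  · exact ⟨⟨5, by norm_num⟩, by simp; linear_combination -ρ^2 * h3⟩
  · exact ⟨⟨0, by norm_num⟩, by simp; linear_combination -h3⟩
  · exact ⟨⟨1, by norm_num⟩, by simp; linear_combination -ρ * h3⟩
  · exact ⟨⟨2, by norm_num⟩, by simp; linear_combination -ρ^2 * h3⟩

lemma abs_lt_one_iff {t : ℂ} : ‖t‖ < 1 ↔ Complex.normSq t < 1 := by
  rw [← Complex.sq_norm]
  constructor
  · intro h; nlinarith [norm_nonneg t]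
  · intro h; nlinarith [norm_nonneg t]

lemma cover (d e : ℝ) (h1 : 0 ≤ d) (h2 : d ≤ 1) (h3 : 0 ≤ e) (h4 : e ≤ 1) :
    d^2 + d*e + e^2 ≤ 1/3 ∨ (d-1)^2 + (d-1)*e + e^2 ≤ 1/3 ∨
    d^2 + d*(e-1) + (e-1)^2 ≤ 1/3 ∨ (d-1)^2 + (d-1)*(e-1) + (e-1)^2 ≤ 1/3 := by
  rcases le_total e d with hed | hed
  · rcases le_total (2*d + e) 1 with hA | hA
    · left
      nlinarith [mul_nonneg h1 h3, sq_nonneg (d - e), sq_nonneg (d + e - 2/3)]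
    · rcases le_total (d + 2*e) 2 with hB | hB
      · right; left
        nlinarith [mul_nonneg h3 (sub_nonneg.2 hed), sq_nonneg (d + e - 2/3),
          sq_nonneg (d + e - 4/3), mul_nonneg (sub_nonneg.2 hed) (sub_nonneg.2 h2)]
      · right; right; right
        nlinarith [mul_nonneg (sub_nonneg.2 h2) (sub_nonneg.2 h4), sq_nonneg (d + e - 4/3)]
  · rcases le_total (d + 2*e) 1 with hA | hA
    · left
      nlinarith [mul_nonneg h1 h3, sq_nonneg (d - e), sq_nonneg (d + e - 2/3)]
    · rcases le_total (2*d + e) 2 with hB | hB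
      · right; right; left
        nlinarith [mul_nonneg h1 (sub_nonneg.2 hed), sq_nonneg (d + e - 2/3),
          sq_nonneg (d + e - 4/3), mul_nonneg (sub_nonneg.2 hed) (sub_nonneg.2 h4)]
      · right; right; right
        nlinarith [mul_nonneg (sub_nonneg.2 h2) (sub_nonneg.2 h4), sq_nonneg (d + e - 4/3)]

lemma z_decomp (z : ℂ) : ∃ s t : ℝ, z = (s:ℂ) + (t:ℂ) * ρ := by
  have h3 : (0:ℝ) < Real.sqrt 3 := Real.sqrt_pos.2 (by norm_num)
  refine ⟨z.re - z.im / Real.sqrt 3, 2 * z.im / Real.sqrt 3, ?_⟩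
  apply Complex.ext
  · rw [eis_re]; field_simp; nlinarith [s3sq]
  · rw [eis_im]; field_simp

lemma exists_near (z : ℂ) : ∃ w : ℂ, IsEisensteinInt w ∧ Complex.normSq (w - z) ≤ 1/3 := by
  obtain ⟨s, t, rfl⟩ := z_decomp z
  set a0 := ⌊s⌋; set b0 := ⌊t⌋
  set d := s - a0 with hd; set e := t - b0 with he
  have hfact : ∀ i j : ℤ, Complex.normSq (((i:ℂ) + (j:ℂ)*ρ) - ((s:ℂ) + (t:ℂ)*ρ)) =
      ((i:ℝ) - s)^2 + ((i:ℝ) - s)*((j:ℝ) - t) + ((j:ℝ) - t)^2 := by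
    intro i j
    have : ((i:ℂ) + (j:ℂ)*ρ) - ((s:ℂ) + (t:ℂ)*ρ) = (((i:ℝ) - s : ℝ):ℂ) + (((j:ℝ) - t : ℝ):ℂ)*ρ := by
      push_cast; ring
    rw [this, eis_normSq]
  have hcov := cover d e (sub_nonneg.2 (Int.floor_le s)) (by simp [hd]; linarith [Int.lt_floor_add_one s])
    (sub_nonneg.2 (Int.floor_le t)) (by simp [he]; linarith [Int.lt_floor_add_one t])
  have key : ∀ i j : ℤ, ((i:ℝ) - s)^2 + ((i:ℝ) - s)*((j:ℝ) - t) + ((j:ℝ) - t)^2 ≤ 1/3 →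
      ∃ w : ℂ, IsEisensteinInt w ∧ Complex.normSq (w - ((s:ℂ) + (t:ℂ)*ρ)) ≤ 1/3 := by
    intro i j hij
    exact ⟨(i:ℂ) + (j:ℂ)*ρ, ⟨i, j, rfl⟩, by rw [hfact]; exact hij⟩
  have ha0 : (a0:ℝ) - s = -d := by simp [hd]
  have hb0 : (b0:ℝ) - t = -e := by simp [he]
  have ha1 : ((a0+1:ℤ):ℝ) - s = -(d-1) := by push_cast; simp [hd]; ring
  have hb1 : ((b0+1:ℤ):ℝ) - t = -(e-1) := by push_cast; simp [he]; ring
  rcases hcov with h | h | h | h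
  · exact key a0 b0 (by rw [ha0, hb0]; nlinarith)
  · exact key (a0+1) b0 (by rw [ha1, hb0]; nlinarith)
  · exact key a0 (b0+1) (by rw [ha0, hb1]; nlinarith)
  · exact key (a0+1) (b0+1) (by rw [ha1, hb1]; nlinarith)

lemma real_core (ur ui p q er ei : ℝ)
    (hu1 : ur*ur + ui*ui = 1) (hr0 : 0 ≤ ur*p + ui*q)
    (hr2 : 3/4*(p^2+q^2) ≤ (ur*p+ui*q)^2)
    (hwz : er*er + ei*ei ≤ 1/3) (hxz : (er-p)*(er-p) + (ei-q)*(ei-q) < 1)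
    (hfar : 3 ≤ p*p + q*q) :
    (ur+(er-p))*(ur+(er-p)) + (ui+(ei-q))*(ui+(ei-q)) < 1 ∧
    (ur-p)*(ur-p) + (ui-q)*(ui-q) < p*p + q*q := by
  set r := ur*p + ui*q with hr
  have hrge : 3/2 ≤ r := by nlinarith
  set t := ur*er + ui*ei with ht
  have htsq : t^2 ≤ 1/3 := by nlinarith [sq_nonneg (ur * ei - ui * er)]
  have htle : t ≤ 1 := by nlinarith
  constructor
  · nlinarith
  · nlinarith

lemma step_core (z w x u : ℂ) (hu1 : Complex.normSq u = 1)
    (hr0 : 0 ≤ u.re * (w-x).re + u.im * (w-x).im)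
    (hr2 : 3/4 * ((w-x).re^2 + (w-x).im^2) ≤ (u.re * (w-x).re + u.im * (w-x).im)^2)
    (hwz : Complex.normSq (w-z) ≤ 1/3) (hxz : Complex.normSq (x-z) < 1)
    (hfar : 3 ≤ Complex.normSq (x-w)) :
    Complex.normSq (x+u-z) < 1 ∧ Complex.normSq (x+u-w) < Complex.normSq (x-w) := by
  simp only [Complex.normSq_apply, Complex.sub_re, Complex.sub_im, Complex.add_re,
    Complex.add_im] at *
  have h1 : x.re - z.re = (w.re - z.re) - (w.re - x.re) := by ring
  have h2 : x.im - z.im = (w.im - z.im) - (w.im - x.im) := by ring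
  have h3 : x.re + u.re - z.re = u.re + ((w.re - z.re) - (w.re - x.re)) := by ring
  have h4 : x.im + u.im - z.im = u.im + ((w.im - z.im) - (w.im - x.im)) := by ring
  have h5 : x.re - w.re = -(w.re - x.re) := by ring
  have h6 : x.im - w.im = -(w.im - x.im) := by ring
  rw [h1, h2] at hxz
  rw [h5, h6] at hfar
  rw [h3, h4, h5, h6]
  have := real_core u.re u.im (w.re - x.re) (w.im - x.im) (w.re - z.re) (w.im - z.im)
    hu1 hr0 hr2 hwz hxz (by nlinarith)
  constructor
  · linarith [this.1]
  · nlinarith [this.2]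

lemma choose_u (d : ℂ) :
    ∃ u : ℂ, IsEisensteinUnit u ∧ IsEisensteinInt u ∧ Complex.normSq u = 1 ∧
      0 ≤ u.re * d.re + u.im * d.im ∧
      3/4 * (d.re^2 + d.im^2) ≤ (u.re * d.re + u.im * d.im)^2 := by
  set p := d.re
  set q := d.im
  rcases le_total (3*q^2) (p^2) with hA | hB
  · rcases le_total 0 p with hp | hp
    · refine ⟨1, ⟨⟨0, by norm_num⟩, by simp⟩, ⟨1, 0, by push_cast; ring⟩, by simp, ?_, ?_⟩
      · simpa using hp
      · simp only [Complex.one_re, Complex.one_im]; nlinarith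
    · refine ⟨-1, ⟨⟨3, by norm_num⟩, by simpa using rho_cube.symm⟩,
        ⟨-1, 0, by push_cast; ring⟩, by simp, ?_, ?_⟩
      · simp only [Complex.neg_re, Complex.neg_im, Complex.one_re, Complex.one_im]; nlinarith
      · simp only [Complex.neg_re, Complex.neg_im, Complex.one_re, Complex.one_im]; nlinarith
  · rcases le_total 0 p with hp | hp <;> rcases le_total 0 q with hq | hq
    · -- u = ρ
      have hple : p ≤ Real.sqrt 3 * q := by nlinarith [s3sq, mul_nonneg s3nn hq]
      refine ⟨ρ, ⟨⟨1, by norm_num⟩, by simp⟩, ⟨0, 1, by push_cast; ring⟩,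
        by rw [Complex.normSq_apply, rho_re, rho_im]; nlinarith [s3sq], ?_, ?_⟩
      · rw [rho_re, rho_im]; nlinarith [mul_nonneg s3nn hq]
      · rw [rho_re, rho_im]; nlinarith [mul_nonneg hp (sub_nonneg.2 hple), s3sq]
    · -- u = 1 - ρ
      have hple : p ≤ Real.sqrt 3 * (-q) := by nlinarith [s3sq, mul_nonneg s3nn (neg_nonneg.2 hq)]
      refine ⟨1 - ρ, ⟨⟨5, by norm_num⟩, by simp; linear_combination -ρ^2 * rho_cube + rho_sq⟩,
        ⟨1, -1, by push_cast; ring⟩, ?_, ?_, ?_⟩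
      · rw [Complex.normSq_apply]
        simp only [Complex.sub_re, Complex.sub_im, Complex.one_re, Complex.one_im, rho_re, rho_im]
        nlinarith [s3sq]
      · simp only [Complex.sub_re, Complex.sub_im, Complex.one_re, Complex.one_im, rho_re, rho_im]
        nlinarith [mul_nonneg s3nn (neg_nonneg.2 hq)]
      · simp only [Complex.sub_re, Complex.sub_im, Complex.one_re, Complex.one_im, rho_re, rho_im]
        nlinarith [mul_nonneg hp (sub_nonneg.2 hple), s3sq]
    · -- u = ρ - 1
      have hple : -p ≤ Real.sqrt 3 * q := by nlinarith [s3sq, mul_nonneg s3nn hq]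
      refine ⟨ρ - 1, ⟨⟨2, by norm_num⟩, by simpa using rho_sq.symm⟩,
        ⟨-1, 1, by push_cast; ring⟩, ?_, ?_, ?_⟩
      · rw [Complex.normSq_apply]
        simp only [Complex.sub_re, Complex.sub_im, Complex.one_re, Complex.one_im, rho_re, rho_im]
        nlinarith [s3sq]
      · simp only [Complex.sub_re, Complex.sub_im, Complex.one_re, Complex.one_im, rho_re, rho_im]
        nlinarith [mul_nonneg s3nn hq]
      · simp only [Complex.sub_re, Complex.sub_im, Complex.one_re, Complex.one_im, rho_re, rho_im]
        nlinarith [mul_nonneg (neg_nonneg.2 hp) (sub_nonneg.2 hple), s3sq]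
    · -- u = -ρ
      have hple : -p ≤ Real.sqrt 3 * (-q) := by nlinarith [s3sq, mul_nonneg s3nn (neg_nonneg.2 hq)]
      refine ⟨-ρ, ⟨⟨4, by norm_num⟩, by simp; linear_combination -ρ * rho_cube⟩,
        ⟨0, -1, by push_cast; ring⟩, ?_, ?_, ?_⟩
      · rw [Complex.normSq_apply]
        simp only [Complex.neg_re, Complex.neg_im, rho_re, rho_im]
        nlinarith [s3sq]
      · simp only [Complex.neg_re, Complex.neg_im, rho_re, rho_im]
        nlinarith [mul_nonneg s3nn (neg_nonneg.2 hq)]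
      · simp only [Complex.neg_re, Complex.neg_im, rho_re, rho_im]
        nlinarith [mul_nonneg (neg_nonneg.2 hp) (sub_nonneg.2 hple), s3sq]

lemma no_norm_two (a b : ℤ) : a^2 + a*b + b^2 ≠ 2 := by
  intro h
  have ha : a^2 ≤ 2 := by nlinarith [sq_nonneg (a+b), sq_nonneg (a-b), sq_nonneg b]
  have hb : b^2 ≤ 2 := by nlinarith [sq_nonneg (a+b), sq_nonneg (a-b), sq_nonneg a]
  have ha' : -1 ≤ a ∧ a ≤ 1 := ⟨by nlinarith, by nlinarith⟩
  have hb' : -1 ≤ b ∧ b ≤ 1 := ⟨by nlinarith, by nlinarith⟩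
  obtain ⟨ha1, ha2⟩ := ha'; obtain ⟨hb1, hb2⟩ := hb'
  interval_cases a <;> interval_cases b <;> omega

lemma connect_to (z w : ℂ) (hw : IsEisensteinInt w) (hwz : Complex.normSq (w - z) ≤ 1/3) :
    ∀ n : ℕ, ∀ x : ℂ, IsEisensteinInt x → Complex.normSq (x - z) < 1 →
      Complex.normSq (x - w) ≤ n → Relation.ReflTransGen (EisEdge z) x w := by
  have hwdisk : Complex.normSq (w - z) < 1 := lt_of_le_of_lt hwz (by norm_num)
  intro n
  induction n with
  | zero =>
    intro x hx hxz hb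
    have : Complex.normSq (x - w) = 0 :=
      le_antisymm (by simpa using hb) (Complex.normSq_nonneg _)
    have : x = w := sub_eq_zero.1 (Complex.normSq_eq_zero.1 this)
    exact this ▸ Relation.ReflTransGen.refl
  | succ n ih =>
    intro x hx hxz hb
    obtain ⟨a, b, hab⟩ := eisInt_sub hx hw
    have hN : Complex.normSq (x - w) = ((a^2 + a*b + b^2 : ℤ) : ℝ) := by
      rw [hab]
      have : ((a:ℂ) + (b:ℂ) * ρ) = (((a:ℤ):ℝ):ℂ) + (((b:ℤ):ℝ):ℂ) * ρ := by push_cast; ring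
      rw [this, eis_normSq]; push_cast; ring
    set m : ℤ := a^2 + a*b + b^2 with hm
    have hm0 : 0 ≤ m := by
      have := Complex.normSq_nonneg (x - w)
      rw [hN] at this; exact_mod_cast this
    rcases eq_or_lt_of_le hm0 with h0 | hpos
    · -- m = 0
      have : Complex.normSq (x - w) = 0 := by rw [hN, ← h0]; norm_num
      have : x = w := sub_eq_zero.1 (Complex.normSq_eq_zero.1 this)
      exact this ▸ Relation.ReflTransGen.refl
    rcases eq_or_lt_of_le (show (1:ℤ) ≤ m by omega) with h1 | h2
    · -- m = 1 : direct edge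
      have hunit : IsEisensteinUnit (x - w) := by
        rw [hab]; exact unit_of_pair a b (by omega)
      exact Relation.ReflTransGen.single
        ⟨hx, hw, abs_lt_one_iff.2 hxz, abs_lt_one_iff.2 hwdisk, hunit⟩
    -- m ≥ 2, and m ≠ 2, so m ≥ 3
    have hm3 : 3 ≤ m := by
      have := no_norm_two a b; omega
    have hfar : 3 ≤ Complex.normSq (x - w) := by
      rw [hN]; exact_mod_cast hm3
    obtain ⟨u, huU, huI, hu1, hr0, hr2⟩ := choose_u (w - x)
    obtain ⟨hd1, hd2⟩ := step_core z w x u hu1 hr0 hr2 hwz hxz hfar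
    -- integer norm of the new point
    obtain ⟨a', b', hab'⟩ := eisInt_sub (eisInt_add hx huI) hw
    have hN' : Complex.normSq (x + u - w) = ((a'^2 + a'*b' + b'^2 : ℤ) : ℝ) := by
      rw [hab']
      have : ((a':ℂ) + (b':ℂ) * ρ) = (((a':ℤ):ℝ):ℂ) + (((b':ℤ):ℝ):ℂ) * ρ := by push_cast; ring
      rw [this, eis_normSq]; push_cast; ring
    set m' : ℤ := a'^2 + a'*b' + b'^2 with hm'
    have hmm : (m' : ℝ) < m := by rw [← hN, ← hN']; exact hd2
    have hmm' : m' < m := by exact_mod_cast hmm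
    have hmn : (m : ℝ) ≤ (n+1 : ℕ) := by rw [← hN]; exact hb
    have hmn' : m ≤ n + 1 := by exact_mod_cast hmn
    have hb' : Complex.normSq (x + u - w) ≤ n := by
      rw [hN']
      have : m' ≤ n := by omega
      exact_mod_cast this
    have hedge : EisEdge z x (x + u) := by
      refine ⟨hx, eisInt_add hx huI, abs_lt_one_iff.2 hxz, abs_lt_one_iff.2 hd1, ?_⟩
      have : x - (x + u) = -u := by ring
      rw [this]; exact unit_neg huU
    exact Relation.ReflTransGen.head hedge (ih (x + u) (eisInt_add hx huI) hd1 hb')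

lemma eisedge_symm (z : ℂ) : Symmetric (EisEdge z) := by
  intro x y ⟨h1, h2, h3, h4, h5⟩
  refine ⟨h2, h1, h4, h3, ?_⟩
  have : y - x = -(x - y) := by ring
  rw [this]; exact unit_neg h5

theorem stmt6 (z : ℂ) (x y : ℂ) (hx : IsEisensteinInt x) (hy : IsEisensteinInt y)
    (hxz : ‖x - z‖ < 1) (hyz : ‖y - z‖ < 1) :
    Relation.ReflTransGen (EisEdge z) x y := by
  obtain ⟨w, hw, hwz⟩ := exists_near z
  have hx' := abs_lt_one_iff.1 hxz
  have hy' := abs_lt_one_iff.1 hyz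
  have hxw := connect_to z w hw hwz ⌈Complex.normSq (x - w)⌉₊ x hx hx' (Nat.le_ceil _)
  have hyw := connect_to z w hw hwz ⌈Complex.normSq (y - w)⌉₊ y hy hy' (Nat.le_ceil _)
  exact hxw.trans ((@Relation.ReflTransGen.stdSymm _ _ ⟨fun _ _ h => eisedge_symm z h⟩).symm _ _ hyw)
end

section
/- For any complex numbers z₁, z₂ there exist Gaussian integers r₁, r₂ such that |z₁ - r₁| < 1, |z₂ - r₂| < 1, and |(z₁ - r₁) + (z₂ - r₂)| < 1. -/
lemma one_dim (x y : ℝ) : ∃ n m : ℤ,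
    |x - n| ≤ 2/3 ∧ |y - m| ≤ 2/3 ∧ |(x - n) + (y - m)| ≤ 2/3 := by
  have ha : |x - round x| ≤ 1/2 := abs_sub_round x
  have hb : |y - round y| ≤ 1/2 := abs_sub_round y
  rw [abs_le] at ha hb
  by_cases h : |(x - round x) + (y - round y)| ≤ 2/3
  · exact ⟨round x, round y, abs_le.2 ⟨by linarith [ha.1], by linarith [ha.2]⟩,
      abs_le.2 ⟨by linarith [hb.1], by linarith [hb.2]⟩, h⟩
  · push_neg at h
    rcases lt_abs.mp h with hpos | hneg
    · rcases le_or_gt (x - round x) (y - round y) with hc | hc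
      · refine ⟨round x, round y + 1, ?_, ?_, ?_⟩ <;>
          · push_cast
            rw [abs_le]
            constructor <;> linarith
      · refine ⟨round x + 1, round y, ?_, ?_, ?_⟩ <;>
          · push_cast
            rw [abs_le]
            constructor <;> linarith
    · rcases le_or_gt (x - round x) (y - round y) with hc | hc
      · refine ⟨round x - 1, round y, ?_, ?_, ?_⟩ <;>
          · push_cast
            rw [abs_le]
            constructor <;> linarith
      · refine ⟨round x, round y - 1, ?_, ?_, ?_⟩ <;>
          · push_cast
            rw [abs_le]
            constructor <;> linarith

lemma abs_lt_one_of (w : ℂ) (h1 : |w.re| ≤ 2/3) (h2 : |w.im| ≤ 2/3) :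
    ‖w‖ < 1 := by
  rw [abs_le] at h1 h2
  have hsq : ‖w‖ ^ 2 = w.re ^ 2 + w.im ^ 2 := by
    rw [Complex.sq_norm, Complex.normSq_apply]; ring
  nlinarith [norm_nonneg w]

theorem stmt7 (z₁ z₂ : ℂ) :
    ∃ r₁ r₂ : ℂ, IsGaussianInt r₁ ∧ IsGaussianInt r₂ ∧
      ‖z₁ - r₁‖ < 1 ∧ ‖z₂ - r₂‖ < 1 ∧
      ‖(z₁ - r₁) + (z₂ - r₂)‖ < 1 := by
  obtain ⟨n₁, n₂, h1, h2, h3⟩ := one_dim z₁.re z₂.re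
  obtain ⟨m₁, m₂, k1, k2, k3⟩ := one_dim z₁.im z₂.im
  refine ⟨(n₁ : ℂ) + (m₁ : ℂ) * Complex.I, (n₂ : ℂ) + (m₂ : ℂ) * Complex.I,
    ⟨n₁, m₁, rfl⟩, ⟨n₂, m₂, rfl⟩, ?_, ?_, ?_⟩
  · exact abs_lt_one_of _ (by simpa using h1) (by simpa using k1)
  · exact abs_lt_one_of _ (by simpa using h2) (by simpa using k2)
  · refine abs_lt_one_of _ ?_ ?_
    · simpa using h3
    · simpa using k3
end

section
/- In the ring ℤ[√7], the element √7 is not a finite sum of units. -/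
lemma aux7 : ∀ a : ZMod 7, a^2 ≠ -1 := by decide

lemma aux3 : ∀ a b : ZMod 3, a^2 - 7*b^2 = 1 → b = 0 := by decide

theorem stmt11 : ¬ ∃ (n : ℕ) (u : Fin n → Zsqrtd (7:ℤ)),
    (∀ i, IsUnit (u i)) ∧ (Zsqrtd.sqrtd : Zsqrtd (7:ℤ)) = ∑ i, u i := by
  rintro ⟨n, u, hu, hsum⟩
  have him : ∀ i, ((u i).im : ZMod 3) = 0 := by
    intro i
    have h := (Zsqrtd.isUnit_iff_norm_isUnit (u i)).mp (hu i)
    rw [Int.isUnit_iff] at h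
    have hnorm : (u i).norm = (u i).re * (u i).re - 7 * (u i).im * (u i).im :=
      Zsqrtd.norm_def _
    rcases h with h | h
    · have h3 : ((u i).re : ZMod 3)^2 - 7 * ((u i).im : ZMod 3)^2 = 1 := by
        have := congrArg (fun z : ℤ => (z : ZMod 3)) (hnorm ▸ h)
        push_cast at this
        ring_nf at this ⊢
        linear_combination this
      exact aux3 _ _ h3
    · exfalso
      have h7 : ((u i).re : ZMod 7)^2 = -1 := by
        have := congrArg (fun z : ℤ => (z : ZMod 7)) (hnorm ▸ h)
        push_cast at this
        have h0 : (7 : ZMod 7) = 0 := by decide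
        linear_combination this + ((u i).im : ZMod 7)^2 * h0
      exact aux7 _ h7
  let f : Zsqrtd (7:ℤ) →+ ZMod 3 :=
    AddMonoidHom.mk' (fun z => (z.im : ZMod 3)) (by intro a b; push_cast [Zsqrtd.im_add]; ring)
  have := congrArg f hsum
  rw [map_sum] at this
  simp only [f, AddMonoidHom.mk'_apply, Zsqrtd.im_sqrtd] at this
  rw [Finset.sum_congr rfl (fun i _ => him i), Finset.sum_const_zero] at this
  simp at this
end

section
/- Let d > 0 be squarefree and let O be the ring of integers of ℚ(√d). Then there exists a unit of O of the form a + bδ with a, b ∈ ℤ and b ≠ 0, where δ = √d if d ≢ 1 mod 4 and δ = (1+√d)/2 if d ≡ 1 mod 4. -/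
theorem stmt13 (d : ℤ) (hd : 0 < d) (hsf : Squarefree d)
    (δ : ℝ)
    (hδ : δ = if d % 4 = 1 then (1 + Real.sqrt (d : ℝ)) / 2 else Real.sqrt (d : ℝ)) :
    ∃ a b : ℤ, b ≠ 0 ∧ ∃ c e : ℤ,
      ((a : ℝ) + (b : ℝ) * δ) * ((c : ℝ) + (e : ℝ) * δ) = 1 := by
  by_cases hsq : IsSquare d
  · -- d squarefree and square with d > 0 implies d = 1
    obtain ⟨r, hr⟩ := hsq
    have hru : IsUnit r := hsf r (hr ▸ dvd_refl _)
    have hd1 : d = 1 := by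
      rcases Int.isUnit_iff.mp hru with h | h <;> simp [hr, h]
    subst hd1
    have : δ = 1 := by
      norm_num at hδ
      simpa using hδ
    exact ⟨0, 1, one_ne_zero, 0, 1, by simp [this]⟩
  · obtain ⟨x, y, hxy, hy⟩ := Pell.exists_of_not_isSquare hd hsq
    have hsd : Real.sqrt (d : ℝ) * Real.sqrt (d : ℝ) = (d : ℝ) :=
      Real.mul_self_sqrt (by positivity)
    have key : ∀ a b c e : ℤ, (a : ℝ) + b * δ = x + y * Real.sqrt d →
        (c : ℝ) + e * δ = x - y * Real.sqrt d →
        ((a : ℝ) + (b : ℝ) * δ) * ((c : ℝ) + (e : ℝ) * δ) = 1 := by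
      intro a b c e h1 h2
      rw [h1, h2]
      have : ((x : ℝ) + y * Real.sqrt d) * (x - y * Real.sqrt d)
          = (x : ℝ) ^ 2 - d * y ^ 2 := by linear_combination (-(y:ℝ)^2) * hsd
      rw [this]
      exact_mod_cast congrArg (Int.cast : ℤ → ℝ) hxy
    by_cases h4 : d % 4 = 1
    · rw [if_pos h4] at hδ
      refine ⟨x - y, 2 * y, by simpa using hy, x + y, -(2 * y), ?_⟩
      refine key _ _ _ _ ?_ ?_ <;> · push_cast [hδ]; ring
    · rw [if_neg h4] at hδ
      refine ⟨x, y, hy, x, -y, ?_⟩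
      refine key _ _ _ _ ?_ ?_ <;> · push_cast [hδ]; ring
end
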